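/- With the notation above, LGW_S(X,Y)^{1/2} ≤ GW(S,X) + GW(S,Y), i.e. the linear Gromov–Wasserstein distance with reference S is bounded above by the sum of the GW distances from S to X and from S to Y. -/

import Mathlib

open MeasureTheory Filter Topology

/-- The Gromov–Wasserstein cost of a plan `π` on `X × Y`. -/
noncomputable def gwCost {X Y : Type*} [PseudoMetricSpace X] [PseudoMetricSpace Y]
    [MeasurableSpace X] [MeasurableSpace Y] (π : Measure (X × Y)) : ℝ :=
  ∫ p, ∫ q, (dist p.1 q.1 - dist p.2 q.2) ^ 2 ∂π ∂π

/-- `π` is a coupling of `μ` and `ν`. -/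
def IsCoupling {X Y : Type*} [MeasurableSpace X] [MeasurableSpace Y]
    (π : Measure (X × Y)) (μ : Measure X) (ν : Measure Y) : Prop :=
  π.map Prod.fst = μ ∧ π.map Prod.snd = ν

/-- The squared Gromov–Wasserstein distance. -/
noncomputable def gwSq {X Y : Type*} [PseudoMetricSpace X] [PseudoMetricSpace Y]
    [MeasurableSpace X] [MeasurableSpace Y] (μ : Measure X) (ν : Measure Y) : ℝ :=
  sInf {c | ∃ π : Measure (X × Y), IsCoupling π μ ν ∧ c = gwCost π}

/-- `π` is an optimal Gromov–Wasserstein plan between `μ` and `ν`. -/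
def IsOptGW {X Y : Type*} [PseudoMetricSpace X] [PseudoMetricSpace Y]
    [MeasurableSpace X] [MeasurableSpace Y]
    (π : Measure (X × Y)) (μ : Measure X) (ν : Measure Y) : Prop :=
  IsCoupling π μ ν ∧ gwCost π = gwSq μ ν

/-- The LGW objective of a three-plan on `S × X × Y`:
`∬ |d_X(x,x') − d_Y(y,y')|² dπ dπ`. -/
noncomputable def lgwCost {S X Y : Type*} [PseudoMetricSpace X] [PseudoMetricSpace Y]
    [MeasurableSpace S] [MeasurableSpace X] [MeasurableSpace Y]
    (π : Measure (S × X × Y)) : ℝ :=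
  ∫ p, ∫ q, (dist p.2.1 q.2.1 - dist p.2.2 q.2.2) ^ 2 ∂π ∂π

/-- The linear Gromov–Wasserstein value with reference `(S, σ)`:
infimum of the LGW objective over three-plans whose `(S,X)`- and `(S,Y)`-marginals
are optimal GW plans. -/
noncomputable def lgw {S X Y : Type*} [PseudoMetricSpace S] [PseudoMetricSpace X]
    [PseudoMetricSpace Y] [MeasurableSpace S] [MeasurableSpace X] [MeasurableSpace Y]
    (σ : Measure S) (μ : Measure X) (ν : Measure Y) : ℝ :=
  sInf {c | ∃ π : Measure (S × X × Y),
    IsOptGW (π.map (fun p => (p.1, p.2.1))) σ μ ∧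
    IsOptGW (π.map (fun p => (p.1, p.2.2))) σ ν ∧
    c = lgwCost π}

private lemma myContIntegrable {Z : Type*} [TopologicalSpace Z] [CompactSpace Z]
    [MeasurableSpace Z] [OpensMeasurableSpace Z] (ρ : Measure Z) [IsFiniteMeasure ρ] {f : Z → ℝ}
    (hf : Continuous f) : Integrable f ρ :=
  hf.integrable_of_hasCompactSupport (HasCompactSupport.of_compactSpace f)

private lemma myCS {Z : Type*} [MeasurableSpace Z] (ρ : Measure Z)
    (f g : Z → ℝ) (hf : Integrable (fun z => f z ^ 2) ρ) (hg : Integrable (fun z => g z ^ 2) ρ)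
    (hfg : Integrable (fun z => f z * g z) ρ) :
    ∫ z, f z * g z ∂ρ ≤ Real.sqrt (∫ z, f z ^ 2 ∂ρ) * Real.sqrt (∫ z, g z ^ 2 ∂ρ) := by
  set A := ∫ z, f z ^ 2 ∂ρ with hA'
  set B := ∫ z, g z ^ 2 ∂ρ with hB'
  set C := ∫ z, f z * g z ∂ρ with hC'
  have hA : 0 ≤ A := integral_nonneg fun z => sq_nonneg _
  have hB : 0 ≤ B := integral_nonneg fun z => sq_nonneg _
  have key : C ^ 2 ≤ A * B := by
    have h : ∀ t : ℝ, 0 ≤ A * (t * t) + (2 * C) * t + B := by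
      intro t
      have h0 : 0 ≤ ∫ z, (t * f z + g z) ^ 2 ∂ρ := integral_nonneg fun z => sq_nonneg _
      have hexp : ∫ z, (t * f z + g z) ^ 2 ∂ρ = A * (t * t) + (2 * C) * t + B := by
        calc ∫ z, (t * f z + g z) ^ 2 ∂ρ
            = ∫ z, (t ^ 2 * f z ^ 2 + 2 * t * (f z * g z)) + g z ^ 2 ∂ρ := by
              congr 1; funext z; ring
          _ = (∫ z, t ^ 2 * f z ^ 2 + 2 * t * (f z * g z) ∂ρ) + ∫ z, g z ^ 2 ∂ρ :=
              integral_add ((hf.const_mul _).add (hfg.const_mul _)) hg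
          _ = ((∫ z, t ^ 2 * f z ^ 2 ∂ρ) + ∫ z, 2 * t * (f z * g z) ∂ρ) + ∫ z, g z ^ 2 ∂ρ := by
              rw [integral_add (hf.const_mul _) (hfg.const_mul _)]
          _ = A * (t * t) + (2 * C) * t + B := by
              rw [integral_const_mul, integral_const_mul, ← hA', ← hB', ← hC']; ring
      linarith [hexp ▸ h0]
    have hd := discrim_le_zero h
    rw [discrim] at hd
    nlinarith
  calc C ≤ |C| := le_abs_self _
    _ = Real.sqrt (C ^ 2) := (Real.sqrt_sq_eq_abs C).symm
    _ ≤ Real.sqrt (A * B) := Real.sqrt_le_sqrt key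
    _ = Real.sqrt A * Real.sqrt B := Real.sqrt_mul hA B

private lemma myMink {Z : Type*} [MeasurableSpace Z] (ρ : Measure Z)
    (f g : Z → ℝ) (hf : Integrable (fun z => f z ^ 2) ρ) (hg : Integrable (fun z => g z ^ 2) ρ)
    (hfg : Integrable (fun z => f z * g z) ρ) :
    ∫ z, (f z + g z) ^ 2 ∂ρ
      ≤ (Real.sqrt (∫ z, f z ^ 2 ∂ρ) + Real.sqrt (∫ z, g z ^ 2 ∂ρ)) ^ 2 := by
  have hA : 0 ≤ ∫ z, f z ^ 2 ∂ρ := integral_nonneg fun z => sq_nonneg _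
  have hB : 0 ≤ ∫ z, g z ^ 2 ∂ρ := integral_nonneg fun z => sq_nonneg _
  have hexp : ∫ z, (f z + g z) ^ 2 ∂ρ
      = (∫ z, f z ^ 2 ∂ρ) + 2 * (∫ z, f z * g z ∂ρ) + ∫ z, g z ^ 2 ∂ρ := by
    calc ∫ z, (f z + g z) ^ 2 ∂ρ
        = ∫ z, (f z ^ 2 + 2 * (f z * g z)) + g z ^ 2 ∂ρ := by congr 1; funext z; ring
      _ = (∫ z, f z ^ 2 + 2 * (f z * g z) ∂ρ) + ∫ z, g z ^ 2 ∂ρ :=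
          integral_add (hf.add (hfg.const_mul _)) hg
      _ = ((∫ z, f z ^ 2 ∂ρ) + ∫ z, 2 * (f z * g z) ∂ρ) + ∫ z, g z ^ 2 ∂ρ := by
          rw [integral_add hf (hfg.const_mul _)]
      _ = _ := by rw [integral_const_mul]
  have hcs := myCS ρ f g hf hg hfg
  rw [hexp, add_sq, Real.sq_sqrt hA, Real.sq_sqrt hB]
  linarith

/-- `LGW_S(X,Y)^{1/2} ≤ GW(S,X) + GW(S,Y)`. -/
theorem sqrt_lgw_le_gw_add_gw
    {S X Y : Type*}
    [MetricSpace S] [CompactSpace S] [MeasurableSpace S] [BorelSpace S]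
    [MetricSpace X] [CompactSpace X] [MeasurableSpace X] [BorelSpace X]
    [MetricSpace Y] [CompactSpace Y] [MeasurableSpace Y] [BorelSpace Y]
    (σ : Measure S) (μ : Measure X) (ν : Measure Y)
    [IsProbabilityMeasure σ] [IsProbabilityMeasure μ] [IsProbabilityMeasure ν] :
    Real.sqrt (lgw σ μ ν) ≤ Real.sqrt (gwSq σ μ) + Real.sqrt (gwSq σ ν) := by
  rw [lgw]
  set T := {c | ∃ π : Measure (S × X × Y),
    IsOptGW (π.map (fun p => (p.1, p.2.1))) σ μ ∧
    IsOptGW (π.map (fun p => (p.1, p.2.2))) σ ν ∧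
    c = lgwCost π} with hT
  rcases Set.eq_empty_or_nonempty T with hE | hE
  · rw [hE, Real.sInf_empty, Real.sqrt_zero]
    positivity
  · obtain ⟨c, hcT⟩ := hE
    obtain ⟨π, hx, hy, hc⟩ := hcT
    have hg₁ : Measurable (fun p : S × X × Y => (p.1, p.2.1)) :=
      measurable_fst.prodMk measurable_snd.fst
    have hg₂ : Measurable (fun p : S × X × Y => (p.1, p.2.2)) :=
      measurable_fst.prodMk measurable_snd.snd
    -- π is a probability measure
    have hπ1 : π Set.univ = 1 := by
      have h := congrArg (fun m : Measure S => m Set.univ) hx.1.1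
      simpa [Measure.map_apply measurable_fst MeasurableSet.univ,
        Measure.map_apply hg₁ MeasurableSet.univ] using h
    haveI : IsProbabilityMeasure π := ⟨hπ1⟩
    set ρ := π.prod π with hρ
    -- the three distance functions on (S×X×Y)²
    set dS : (S × X × Y) × (S × X × Y) → ℝ := fun r => dist r.1.1 r.2.1 with hdS
    set dX : (S × X × Y) × (S × X × Y) → ℝ := fun r => dist r.1.2.1 r.2.2.1 with hdX
    set dY : (S × X × Y) × (S × X × Y) → ℝ := fun r => dist r.1.2.2 r.2.2.2 with hdY
    have hcS : Continuous dS := by fun_prop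
    have hcX : Continuous dX := by fun_prop
    have hcY : Continuous dY := by fun_prop
    -- lgwCost as an integral over ρ
    have hL : lgwCost π = ∫ r, (dX r - dY r) ^ 2 ∂ρ := by
      rw [lgwCost, ← integral_prod _ (myContIntegrable ρ (by fun_prop : Continuous
        (fun r : (S × X × Y) × (S × X × Y) => (dX r - dY r) ^ 2)))]
    -- gwCost of the (S,X)-marginal as an integral over ρ
    have hGA : gwCost (π.map (fun p : S × X × Y => (p.1, p.2.1)))
        = ∫ r, (dS r - dX r) ^ 2 ∂ρ := by
      haveI : IsProbabilityMeasure (π.map (fun p : S × X × Y => (p.1, p.2.1))) :=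
        Measure.isProbabilityMeasure_map hg₁.aemeasurable
      rw [gwCost, ← integral_prod _ (myContIntegrable _ (by fun_prop : Continuous
          (fun z : (S × X) × (S × X) => (dist z.1.1 z.2.1 - dist z.1.2 z.2.2) ^ 2))),
        Measure.map_prod_map _ _ hg₁ hg₁,
        integral_map (hg₁.prodMap hg₁).aemeasurable
          (Continuous.aestronglyMeasurable (by fun_prop))]
      rfl
    have hGB : gwCost (π.map (fun p : S × X × Y => (p.1, p.2.2)))
        = ∫ r, (dS r - dY r) ^ 2 ∂ρ := by
      haveI : IsProbabilityMeasure (π.map (fun p : S × X × Y => (p.1, p.2.2))) :=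
        Measure.isProbabilityMeasure_map hg₂.aemeasurable
      rw [gwCost, ← integral_prod _ (myContIntegrable _ (by fun_prop : Continuous
          (fun z : (S × Y) × (S × Y) => (dist z.1.1 z.2.1 - dist z.1.2 z.2.2) ^ 2))),
        Measure.map_prod_map _ _ hg₂ hg₂,
        integral_map (hg₂.prodMap hg₂).aemeasurable
          (Continuous.aestronglyMeasurable (by fun_prop))]
      rfl
    -- the key triangle inequality
    have key : lgwCost π ≤ (Real.sqrt (gwSq σ μ) + Real.sqrt (gwSq σ ν)) ^ 2 := by
      rw [hL, ← hx.2, ← hy.2, hGA, hGB]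
      have h1 : ∫ r, (dX r - dY r) ^ 2 ∂ρ
          = ∫ r, ((dX r - dS r) + (dS r - dY r)) ^ 2 ∂ρ := by
        congr 1; funext r; ring
      have h2 : ∫ r, (dX r - dS r) ^ 2 ∂ρ = ∫ r, (dS r - dX r) ^ 2 ∂ρ := by
        congr 1; funext r; ring
      rw [h1, ← h2]
      exact myMink ρ _ _
        (myContIntegrable ρ (by fun_prop))
        (myContIntegrable ρ (by fun_prop))
        (myContIntegrable ρ (by fun_prop))
    -- wrap up
    have hbdd : BddBelow T := by
      refine ⟨0, fun b hb => ?_⟩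
      obtain ⟨π', _, _, rfl⟩ := hb
      exact integral_nonneg fun p => integral_nonneg fun q => sq_nonneg _
    have hmem : c ∈ T := ⟨π, hx, hy, hc⟩
    have hle : sInf T ≤ (Real.sqrt (gwSq σ μ) + Real.sqrt (gwSq σ ν)) ^ 2 :=
      le_trans (csInf_le hbdd hmem) (hc ▸ key)
    calc Real.sqrt (sInf T)
        ≤ Real.sqrt ((Real.sqrt (gwSq σ μ) + Real.sqrt (gwSq σ ν)) ^ 2) :=
          Real.sqrt_le_sqrt hle
      _ = Real.sqrt (gwSq σ μ) + Real.sqrt (gwSq σ ν) := Real.sqrt_sq (by positivity)
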